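/- arXiv:2603.13003 — 2 statements merged into one kernel-verified Lean document; each statement's English description precedes it below -/
import Mathlib

section
/- Let T_s > 0 and let K_p, K_d be real numbers. For f̄ ∈ (0,1], define the 2×2 real matrix A_cl(f̄) = [[1 − f̄ T_s² K_p / 2, T_s − f̄ T_s² K_d / 2], [−f̄ T_s K_p, 1 − f̄ T_s K_d]]. If A_cl(1) is Schur stable (all eigenvalues have modulus strictly less than 1), then A_cl(f̄) is Schur stable for every f̄ ∈ (0,1]. -/
open Matrix

/-- A real square matrix is Schur stable if every complex eigenvalue has modulus
strictly less than one. -/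
def SchurStable {k : ℕ} (M : Matrix (Fin k) (Fin k) ℝ) : Prop :=
  ∀ z ∈ spectrum ℂ (M.map Complex.ofReal), ‖z‖ < 1

/-- Frozen-gain closed-loop matrix of the sampled double integrator under the
scaled state feedback `u = -f̄ [K_p, K_d] x` with sampling time `T_s`. -/
noncomputable def Acl (Ts Kp Kd f : ℝ) : Matrix (Fin 2) (Fin 2) ℝ :=
  !![1 - f * Ts ^ 2 * Kp / 2, Ts - f * Ts ^ 2 * Kd / 2;
     -(f * Ts * Kp), 1 - f * Ts * Kd]
lemma mem_spectrum_fin_two (N : Matrix (Fin 2) (Fin 2) ℂ) (z : ℂ) :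
    z ∈ spectrum ℂ N ↔ (z - N 0 0) * (z - N 1 1) - N 0 1 * N 1 0 = 0 := by
  rw [spectrum.mem_iff, Matrix.isUnit_iff_isUnit_det, isUnit_iff_ne_zero, not_not,
    Matrix.det_fin_two]
  simp [Matrix.algebraMap_matrix_apply]


lemma roots_lt_one_of_jury (b c : ℝ) (hc : |c| < 1) (h1 : 0 < 1 + b + c)
    (h2 : 0 < 1 - b + c) (z : ℂ) (hz : z ^ 2 + b * z + c = 0) : ‖z‖ < 1 := by
  obtain ⟨hc1, hc2⟩ := abs_lt.mp hc
  by_cases him : z.im = 0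
  · have hx : z = (z.re : ℂ) := Complex.ext rfl (by simp [him])
    set x := z.re with hxdef
    rw [hx] at hz
    have hre : x ^ 2 + b * x + c = 0 := by exact_mod_cast hz
    rw [hx, Complex.norm_real, Real.norm_eq_abs, abs_lt]
    constructor
    · nlinarith [sq_nonneg (x + 1), sq_nonneg (x - 1), sq_nonneg x]
    · nlinarith [sq_nonneg (x + 1), sq_nonneg (x - 1), sq_nonneg x]
  · have hconj : (starRingEnd ℂ) z ^ 2 + b * (starRingEnd ℂ) z + c = 0 := by
      have := congrArg (starRingEnd ℂ) hz
      simp only [map_add, _root_.map_mul, map_pow, map_zero, Complex.conj_ofReal] at this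
      exact this
    have hne : (starRingEnd ℂ) z ≠ z := fun h => him (Complex.conj_eq_iff_im.mp h)
    have hsum : z + (starRingEnd ℂ) z = -b := by
      have hdiff : (z - (starRingEnd ℂ) z) * (z + (starRingEnd ℂ) z + b) = 0 := by
        linear_combination hz - hconj
      rcases mul_eq_zero.mp hdiff with h | h
      · exact absurd (sub_eq_zero.mp h).symm hne
      · linear_combination h
    have hprod : z * (starRingEnd ℂ) z = (c : ℂ) := by
      linear_combination z * hsum - hz
    have hnormSq : (Complex.normSq z : ℝ) = c := by
      rw [Complex.mul_conj] at hprod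
      exact_mod_cast hprod
    have habs : ‖z‖ ^ 2 < 1 := by
      rw [Complex.sq_norm]; linarith
    nlinarith [norm_nonneg z]


lemma jury_pos_aux (b c : ℝ)
    (h : ∀ z : ℂ, z ^ 2 + b * z + c = 0 → ‖z‖ < 1) : 0 < 1 + b + c := by
  by_contra hle
  push_neg at hle
  set X : ℝ := 1 + |b| + |c| with hX
  have hX1 : (1 : ℝ) ≤ X := by
    have := abs_nonneg b; have := abs_nonneg c; linarith
  have hgX : (0 : ℝ) ≤ X ^ 2 + b * X + c := by
    have hb := le_abs_self b; have hb' := neg_abs_le b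
    have hcabs := le_abs_self c; have hc' := neg_abs_le c
    nlinarith [abs_nonneg b, abs_nonneg c]
  have hcont : ContinuousOn (fun x : ℝ => x ^ 2 + b * x + c) (Set.Icc 1 X) := by
    fun_prop
  have hmem : (0 : ℝ) ∈ Set.Icc ((fun x : ℝ => x ^ 2 + b * x + c) 1)
      ((fun x : ℝ => x ^ 2 + b * x + c) X) := by
    constructor <;> simp <;> linarith
  obtain ⟨x, hxI, hx0⟩ := intermediate_value_Icc hX1 hcont hmem
  have hroot : ((x : ℂ)) ^ 2 + b * x + c = 0 := by
    have : x ^ 2 + b * x + c = 0 := hx0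
    exact_mod_cast congrArg (Complex.ofReal) this
  have := h x hroot
  rw [Complex.norm_real, Real.norm_eq_abs] at this
  have hx1 : (1 : ℝ) ≤ x := hxI.1
  rw [abs_of_nonneg (by linarith)] at this
  linarith

lemma jury_of_roots (b c : ℝ)
    (h : ∀ z : ℂ, z ^ 2 + b * z + c = 0 → ‖z‖ < 1) :
    |c| < 1 ∧ 0 < 1 + b + c ∧ 0 < 1 - b + c := by
  refine ⟨?_, jury_pos_aux b c h, ?_⟩
  · obtain ⟨s, hs⟩ := IsAlgClosed.exists_pow_nat_eq ((b : ℂ) ^ 2 - 4 * c) (n := 2) (by norm_num)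
    set r : ℂ := (-b + s) / 2 with hr
    set r' : ℂ := (-b - s) / 2 with hr'
    have hroot : r ^ 2 + b * r + c = 0 := by
      rw [hr]; linear_combination hs / 4
    have hroot' : r' ^ 2 + b * r' + c = 0 := by
      rw [hr']; linear_combination hs / 4
    have hprod : r * r' = (c : ℂ) := by
      rw [hr, hr']; linear_combination -hs / 4
    have h1 := h r hroot
    have h2 := h r' hroot'
    have : ‖((c : ℂ))‖ < 1 := by
      rw [← hprod, Complex.norm_def, Complex.normSq_mul, Real.sqrt_mul (Complex.normSq_nonneg r)]
      rw [← Complex.norm_def, ← Complex.norm_def]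
      nlinarith [norm_nonneg r, norm_nonneg r']
    rwa [Complex.norm_real, Real.norm_eq_abs] at this
  · have h' : ∀ z : ℂ, z ^ 2 + (-b : ℝ) * z + c = 0 → ‖z‖ < 1 := by
      intro z hz
      have : (-z) ^ 2 + b * (-z) + c = 0 := by push_cast at hz ⊢; linear_combination hz
      have := h (-z) this
      simpa using this
    have := jury_pos_aux (-b) c h'
    linarith

lemma spec_iff_quad (Ts Kp Kd f : ℝ) (z : ℂ) :
    z ∈ spectrum ℂ ((Acl Ts Kp Kd f).map Complex.ofReal) ↔
      z ^ 2 + ((f * (Ts ^ 2 * Kp / 2 + Ts * Kd) - 2 : ℝ) : ℂ) * z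
        + ((1 + f * (Ts ^ 2 * Kp / 2 - Ts * Kd) : ℝ) : ℂ) = 0 := by
  rw [mem_spectrum_fin_two]
  simp only [Matrix.map_apply, Acl, Matrix.cons_val', Matrix.cons_val_zero,
    Matrix.empty_val', Matrix.cons_val_fin_one, Matrix.cons_val_one, Matrix.head_cons,
    Matrix.head_fin_const, Matrix.of_apply, Matrix.head_val']
  push_cast
  constructor <;> intro h <;> linear_combination h

/-- If the nominal closed loop `A_cl(1)` is Schur stable, then the frozen-gain
closed loop `A_cl(f̄)` is Schur stable for every `f̄ ∈ (0, 1]`. -/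
theorem frozen_gain_schur_stable (Ts Kp Kd : ℝ) (hTs : 0 < Ts)
    (hnom : SchurStable (Acl Ts Kp Kd 1)) :
    ∀ f ∈ Set.Ioc (0 : ℝ) 1, SchurStable (Acl Ts Kp Kd f) := by
  intro f hf
  obtain ⟨hf0, hf1⟩ := hf
  set α : ℝ := Ts ^ 2 * Kp / 2 with hα
  set β : ℝ := Ts * Kd with hβ
  -- nominal Jury conditions
  have hnom' : ∀ z : ℂ, z ^ 2 + ((1 * (α + β) - 2 : ℝ) : ℂ) * z
      + ((1 + 1 * (α - β) : ℝ) : ℂ) = 0 → ‖z‖ < 1 := by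
    intro z hz
    exact hnom z ((spec_iff_quad Ts Kp Kd 1 z).mpr hz)
  obtain ⟨hcabs, hpos1, hpos2⟩ := jury_of_roots _ _ hnom'
  obtain ⟨hc1, hc2⟩ := abs_lt.mp hcabs
  have hαpos : 0 < α := by linarith
  have hβlt : β < 2 := by linarith
  have hαβ : α - β < 0 := by linarith
  have hαβ2 : -2 < α - β := by linarith
  -- Jury conditions for frozen gain f
  have jc1 : |(1 + f * (α - β) : ℝ)| < 1 := by
    rw [abs_lt]
    constructor
    · nlinarith [mul_nonneg (by linarith : (0:ℝ) ≤ 1 - f) (by linarith : (0:ℝ) ≤ β - α)]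
    · nlinarith [mul_pos hf0 (by linarith : (0:ℝ) < β - α)]
  have jc2 : 0 < 1 + (f * (α + β) - 2) + (1 + f * (α - β)) := by
    have := mul_pos hf0 hαpos
    nlinarith
  have jc3 : 0 < 1 - (f * (α + β) - 2) + (1 + f * (α - β)) := by
    have := mul_pos hf0 (by linarith : (0:ℝ) < 2 - β)
    nlinarith
  intro z hz
  exact roots_lt_one_of_jury _ _ jc1 jc2 jc3 z ((spec_iff_quad Ts Kp Kd f z).mp hz)
end

section
/- Let T_s > 0, let K_p, K_d be real numbers, and let f̄ ∈ (0,1]. Define the 2×2 real matrix A_cl(f̄) = [[1 − f̄ T_s² K_p / 2, T_s − f̄ T_s² K_d / 2], [−f̄ T_s K_p, 1 − f̄ T_s K_d]]. Then A_cl(f̄) is Schur stable (all eigenvalues have modulus strictly less than 1) if and only if the three inequalities f̄ T_s² K_p > 0, 2 − f̄ T_s K_d > 0, and K_d > (T_s/2) K_p all hold. -/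
open Matrix

/-- Membership in the spectrum of `Acl` is equivalent to being a root of its
characteristic quadratic. -/
lemma acl_mem_spectrum_iff (Ts Kp Kd f : ℝ) (z : ℂ) :
    z ∈ spectrum ℂ ((Acl Ts Kp Kd f).map Complex.ofReal) ↔
      z ^ 2 - ((2 - f * Ts ^ 2 * Kp / 2 - f * Ts * Kd : ℝ) : ℂ) * z
        + ((1 - f * Ts * Kd + f * Ts ^ 2 * Kp / 2 : ℝ) : ℂ) = 0 := by
  rw [spectrum.mem_iff, Matrix.isUnit_iff_isUnit_det, isUnit_iff_ne_zero, not_not,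
    Matrix.det_fin_two]
  simp [Acl, Matrix.algebraMap_matrix_apply, Matrix.map_apply]
  constructor <;> intro h <;> push_cast at h ⊢ <;> linear_combination h

/-- Jury criterion, necessity: if both roots of `z² - t z + d` lie strictly inside
the unit disk, then `1 - t + d > 0`, `1 + t + d > 0` and `|d| < 1`. -/
lemma jury_necessary (t d : ℝ)
    (h : ∀ z : ℂ, z ^ 2 - (t : ℂ) * z + (d : ℂ) = 0 → ‖z‖ < 1) :
    0 < 1 - t + d ∧ 0 < 1 + t + d ∧ |d| < 1 := by
  rcases le_or_gt (4 * d) (t ^ 2) with hD | hD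
  · -- real roots
    set s := Real.sqrt (t ^ 2 - 4 * d) with hs
    have hs2 : s ^ 2 = t ^ 2 - 4 * d := Real.sq_sqrt (by linarith)
    have hsC : (s : ℂ) ^ 2 = (t : ℂ) ^ 2 - 4 * (d : ℂ) := by exact_mod_cast hs2
    have hr1 : |(t + s) / 2| < 1 := by
      have := h (((t + s) / 2 : ℝ) : ℂ) (by push_cast; linear_combination ((1:ℂ)/4) * hsC)
      rwa [Complex.norm_real, Real.norm_eq_abs] at this
    have hr2 : |(t - s) / 2| < 1 := by
      have := h (((t - s) / 2 : ℝ) : ℂ) (by push_cast; linear_combination ((1:ℂ)/4) * hsC)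
      rwa [Complex.norm_real, Real.norm_eq_abs] at this
    rw [abs_lt] at hr1 hr2
    obtain ⟨a1, b1⟩ := hr1; obtain ⟨a2, b2⟩ := hr2
    refine ⟨by nlinarith, by nlinarith, abs_lt.2 ⟨by nlinarith, by nlinarith⟩⟩
  · -- complex conjugate roots
    set s := Real.sqrt (4 * d - t ^ 2) with hs
    have hs2 : s ^ 2 = 4 * d - t ^ 2 := Real.sq_sqrt (by linarith)
    have hsC : (s : ℂ) ^ 2 = 4 * (d : ℂ) - (t : ℂ) ^ 2 := by exact_mod_cast hs2
    have hz : ((t : ℂ) / 2 + (s : ℂ) / 2 * Complex.I) ^ 2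
        - (t : ℂ) * ((t : ℂ) / 2 + (s : ℂ) / 2 * Complex.I) + (d : ℂ) = 0 := by
      linear_combination ((s : ℂ) ^ 2 / 4) * Complex.I_sq + (-(1:ℂ)/4) * hsC
    have habs := h _ hz
    have hsq : ‖(t : ℂ) / 2 + (s : ℂ) / 2 * Complex.I‖ ^ 2 = d := by
      rw [Complex.sq_norm]
      have he : ((t : ℂ) / 2 + (s : ℂ) / 2 * Complex.I) = Complex.mk (t / 2) (s / 2) := by
        apply Complex.ext <;> simp
      rw [he, Complex.normSq_mk]; nlinarith
    have hd1 : d < 1 := by nlinarith [norm_nonneg ((t : ℂ) / 2 + (s : ℂ) / 2 * Complex.I)]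
    have hd0 : 0 ≤ d := by nlinarith [norm_nonneg ((t : ℂ) / 2 + (s : ℂ) / 2 * Complex.I)]
    refine ⟨by nlinarith, by nlinarith, abs_lt.2 ⟨by linarith, hd1⟩⟩

/-- Jury criterion, sufficiency: if `1 - t + d > 0`, `1 + t + d > 0` and `|d| < 1`,
then every complex root of `z² - t z + d` lies strictly inside the unit disk. -/
lemma jury_sufficient (t d : ℝ) (h1 : 0 < 1 - t + d) (h2 : 0 < 1 + t + d) (h3 : |d| < 1) :
    ∀ z : ℂ, z ^ 2 - (t : ℂ) * z + (d : ℂ) = 0 → ‖z‖ < 1 := by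
  intro z hz
  rw [abs_lt] at h3
  obtain ⟨h3a, h3b⟩ := h3
  have hconj : (starRingEnd ℂ z) ^ 2 - (t : ℂ) * (starRingEnd ℂ z) + (d : ℂ) = 0 := by
    have := congrArg (starRingEnd ℂ) hz
    simpa [_root_.map_sub, _root_.map_add, _root_.map_mul, _root_.map_pow] using this
  have hsplit : (starRingEnd ℂ z - z) * (starRingEnd ℂ z - ((t : ℂ) - z)) = 0 := by
    linear_combination hconj - hz
  rcases mul_eq_zero.1 hsplit with hc | hc
  · -- z is real
    have hre : (z.re : ℂ) = z := Complex.conj_eq_iff_re.1 (sub_eq_zero.1 hc)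
    set r := z.re with hrdef
    have hroot : r ^ 2 - t * r + d = 0 := by
      have : ((r ^ 2 - t * r + d : ℝ) : ℂ) = 0 := by push_cast [hre]; linear_combination hz
      exact_mod_cast this
    rw [← hre, Complex.norm_real, Real.norm_eq_abs, abs_lt]
    constructor
    · by_contra hcon
      push_neg at hcon
      nlinarith [mul_nonneg (by linarith : (0:ℝ) ≤ -(r+1)) (by linarith : (0:ℝ) ≤ -(r+d)),
        mul_pos (by linarith : (0:ℝ) < -r) h2]
    · by_contra hcon
      push_neg at hcon
      nlinarith [mul_nonneg (by linarith : (0:ℝ) ≤ r - 1) (by linarith : (0:ℝ) ≤ r - d),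
        mul_pos (by linarith : (0:ℝ) < r) h1]
  · -- conj z = t - z, so |z|² = d
    have hmul : z * starRingEnd ℂ z = (d : ℂ) := by
      rw [sub_eq_zero.1 hc]; linear_combination -hz
    have hcast : (Complex.normSq z : ℂ) = (d : ℂ) := by rw [← Complex.mul_conj]; exact hmul
    have hn : Complex.normSq z = d := by exact_mod_cast hcast
    have hsab := Complex.sq_norm z
    nlinarith [norm_nonneg z]

/-- Jury-criterion characterization: `A_cl(f̄)` is Schur stable if and only if
`f̄ T_s² K_p > 0`, `2 - f̄ T_s K_d > 0`, and `K_d > (T_s / 2) K_p`. -/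
theorem frozen_gain_schur_stable_iff (Ts Kp Kd : ℝ) (hTs : 0 < Ts)
    (f : ℝ) (hf : f ∈ Set.Ioc (0 : ℝ) 1) :
    SchurStable (Acl Ts Kp Kd f) ↔
      (0 < f * Ts ^ 2 * Kp ∧ 0 < 2 - f * Ts * Kd ∧ Ts / 2 * Kp < Kd) := by
  obtain ⟨hf0, hf1⟩ := hf
  have hfTs : 0 < f * Ts := mul_pos hf0 hTs
  set t : ℝ := 2 - f * Ts ^ 2 * Kp / 2 - f * Ts * Kd with ht
  set d : ℝ := 1 - f * Ts * Kd + f * Ts ^ 2 * Kp / 2 with hd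
  have hspec : SchurStable (Acl Ts Kp Kd f) ↔
      ∀ z : ℂ, z ^ 2 - (t : ℂ) * z + (d : ℂ) = 0 → ‖z‖ < 1 := by
    constructor
    · intro h z hz
      exact h z ((acl_mem_spectrum_iff Ts Kp Kd f z).2 hz)
    · intro h z hz
      exact h z ((acl_mem_spectrum_iff Ts Kp Kd f z).1 hz)
  rw [hspec]
  constructor
  · intro h
    obtain ⟨h1, h2, h3⟩ := jury_necessary t d h
    rw [abs_lt] at h3
    refine ⟨by simp only [ht, hd] at h1; linarith, by simp only [ht, hd] at h2; linarith, ?_⟩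
    have hdlt : f * Ts ^ 2 * Kp / 2 < f * Ts * Kd := by
      simp only [ht, hd] at h3; linarith [h3.2]
    have : f * Ts * (Ts / 2 * Kp) < f * Ts * Kd := by nlinarith
    exact lt_of_mul_lt_mul_left (by linarith) (le_of_lt hfTs)
  · rintro ⟨h1, h2, h3⟩
    apply jury_sufficient
    · simp only [ht, hd]; linarith
    · simp only [ht, hd]; linarith
    · rw [abs_lt]
      constructor
      · simp only [hd]
        have : 0 < f * Ts * (2 - f * Ts * Kd) := by positivity
        nlinarith
      · simp only [hd]
        have : f * Ts * (Ts / 2 * Kp) < f * Ts * Kd := by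
          exact mul_lt_mul_of_pos_left h3 hfTs
        nlinarith
end
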